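/- arXiv:1501.07635 — 2 statements merged into one kernel-verified Lean document; each statement's English description precedes it below -/
import Mathlib

section
/- Let ρ₀, ρ₁ be densities of mass V with ρ₁ > 0 λ-almost everywhere, and assume the function ρ₀ · log(ρ₀/ρ₁) (with the convention 0 · log(0/ρ₁) = 0) is λ-integrable. With the Kullback–Leibler divergence d_KL(ρ₀, ρ₁) := ∫ ρ₀ log(ρ₀/ρ₁) dλ, the Fisher–Rao distance satisfies d_F(ρ₀, ρ₁) ≤ √((π/2) · d_KL(ρ₀, ρ₁)); in particular d_KL(ρ₀, ρ₁) ≥ 0. (Item 8 of the Proposition in Appendix B.) -/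
open MeasureTheory Real Set

/-- A density of mass `V`: a measurable nonnegative function with total integral `V`. -/
def IsDensity {X : Type*} [MeasurableSpace X] (lam : Measure X) (V : ℝ) (ρ : X → ℝ) : Prop :=
  Measurable ρ ∧ (∀ x, 0 ≤ ρ x) ∧ (∫ x, ρ x ∂lam) = V

/-- The Fisher–Rao (spherical Hellinger) distance between two densities. -/
noncomputable def fisherRaoDist {X : Type*} [MeasurableSpace X] (lam : Measure X) (V : ℝ)
    (ρ₀ ρ₁ : X → ℝ) : ℝ :=
  Real.sqrt V * Real.arccos ((1 / V) * ∫ x, Real.sqrt (ρ₀ x * ρ₁ x) ∂lam)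

/-- The Kullback–Leibler divergence `∫ ρ₀ log(ρ₀/ρ₁) dλ`.
(Note that in Lean `0 * Real.log (0 / ρ₁ x) = 0`, which realizes the convention
`0·log(0/ρ₁) = 0`.) -/
noncomputable def klDiv {X : Type*} [MeasurableSpace X] (lam : Measure X)
    (ρ₀ ρ₁ : X → ℝ) : ℝ :=
  ∫ x, ρ₀ x * Real.log (ρ₀ x / ρ₁ x) ∂lam

lemma sq_le_pi_one_sub_cos {θ : ℝ} (h0 : 0 ≤ θ) (h1 : θ ≤ π / 2) :
    θ ^ 2 ≤ π * (1 - Real.cos θ) := by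
  have key : MonotoneOn (fun t : ℝ => π * (1 - Real.cos t) - t ^ 2) (Icc 0 (π / 2)) := by
    apply monotoneOn_of_deriv_nonneg (convex_Icc _ _)
    · fun_prop
    · intro t ht
      apply DifferentiableAt.differentiableWithinAt
      fun_prop
    · intro t ht
      rw [interior_Icc] at ht
      have hd : HasDerivAt (fun t : ℝ => π * (1 - Real.cos t) - t ^ 2)
          (π * Real.sin t - 2 * t) t := by
        have h1 : HasDerivAt (fun t : ℝ => π * (1 - Real.cos t)) (π * Real.sin t) t := by
          simpa using ((Real.hasDerivAt_cos t).const_sub 1).const_mul π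
        exact (h1.sub (hasDerivAt_pow 2 t)).congr_deriv (by norm_num)
      rw [hd.deriv]
      have := Real.mul_le_sin ht.1.le ht.2.le
      have hπ := Real.pi_pos
      have h2 : π * (2 / π * t) ≤ π * Real.sin t :=
        mul_le_mul_of_nonneg_left this hπ.le
      have h3 : π * (2 / π * t) = 2 * t := by field_simp
      linarith
  have := key (left_mem_Icc.2 (by linarith [Real.pi_pos])) ⟨h0, h1⟩ h0
  simpa using this

lemma ptwise_kl {a b : ℝ} (ha : 0 ≤ a) (hb : 0 < b) :
    2 * a - 2 * Real.sqrt (a * b) ≤ a * Real.log (a / b) := by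
  rcases eq_or_lt_of_le ha with h | ha
  · simp [← h]
  · set sa := Real.sqrt a with hsa
    set sb := Real.sqrt b with hsb
    have hsa0 : 0 < sa := Real.sqrt_pos.2 ha
    have hsb0 : 0 < sb := Real.sqrt_pos.2 hb
    have hA : sa ^ 2 = a := Real.sq_sqrt ha.le
    have hB : sb ^ 2 = b := Real.sq_sqrt hb.le
    have hab : Real.sqrt (a * b) = sa * sb := Real.sqrt_mul ha.le b
    have hlog : Real.log (sb / sa) ≤ sb / sa - 1 :=
      Real.log_le_sub_one_of_pos (by positivity)
    have hlog2 : Real.log (a / b) = 2 * Real.log (sa / sb) := by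
      rw [← hA, ← hB, Real.log_div (by positivity) (by positivity),
        Real.log_div hsa0.ne' hsb0.ne', Real.log_pow, Real.log_pow]
      ring
    have hlog3 : Real.log (sa / sb) = - Real.log (sb / sa) := by
      rw [← Real.log_inv]
      congr 1
      field_simp
    have h1 : 2 * (1 - sb / sa) ≤ Real.log (a / b) := by
      rw [hlog2, hlog3]; linarith
    have := mul_le_mul_of_nonneg_left h1 ha.le
    have hid : a * (2 * (1 - sb / sa)) = 2 * a - 2 * (sa * sb) := by
      rw [← hA]; field_simp
    rw [hab]; linarith [hid ▸ this]

theorem fisherRao_le_sqrt_klDiv'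
    {X : Type*} [MeasurableSpace X] (lam : Measure X) [IsFiniteMeasure lam]
    (V : ℝ) (hV : 0 < V) (hVmass : (lam Set.univ).toReal = V)
    (ρ₀ ρ₁ : X → ℝ) (h₀ : (Measurable ρ₀ ∧ (∀ x, 0 ≤ ρ₀ x) ∧ (∫ x, ρ₀ x ∂lam) = V))
    (h₁ : (Measurable ρ₁ ∧ (∀ x, 0 ≤ ρ₁ x) ∧ (∫ x, ρ₁ x ∂lam) = V))
    (h₁pos : ∀ᵐ x ∂lam, 0 < ρ₁ x)
    (hint : Integrable (fun x => ρ₀ x * Real.log (ρ₀ x / ρ₁ x)) lam) :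
    Real.sqrt V * Real.arccos ((1 / V) * ∫ x, Real.sqrt (ρ₀ x * ρ₁ x) ∂lam)
      ≤ Real.sqrt ((π / 2) * ∫ x, ρ₀ x * Real.log (ρ₀ x / ρ₁ x) ∂lam) ∧
    0 ≤ ∫ x, ρ₀ x * Real.log (ρ₀ x / ρ₁ x) ∂lam := by
  obtain ⟨hm₀, hn₀, hi₀⟩ := h₀
  obtain ⟨hm₁, hn₁, hi₁⟩ := h₁
  have hint₀ : Integrable ρ₀ lam := by
    by_contra h
    rw [integral_undef h] at hi₀; linarith
  have hint₁ : Integrable ρ₁ lam := by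
    by_contra h
    rw [integral_undef h] at hi₁; linarith
  set g : X → ℝ := fun x => Real.sqrt (ρ₀ x * ρ₁ x) with hg
  have hgle : ∀ x, g x ≤ (ρ₀ x + ρ₁ x) / 2 := by
    intro x
    have h0 : Real.sqrt (ρ₀ x * ρ₁ x) = Real.sqrt (ρ₀ x) * Real.sqrt (ρ₁ x) :=
      Real.sqrt_mul (hn₀ x) _
    have hA : Real.sqrt (ρ₀ x) ^ 2 = ρ₀ x := Real.sq_sqrt (hn₀ x)
    have hB : Real.sqrt (ρ₁ x) ^ 2 = ρ₁ x := Real.sq_sqrt (hn₁ x)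
    rw [hg]; simp only
    nlinarith [sq_nonneg (Real.sqrt (ρ₀ x) - Real.sqrt (ρ₁ x))]
  have hintg : Integrable g lam := by
    refine Integrable.mono' ((hint₀.add hint₁).div_const 2) ((hm₀.mul hm₁).sqrt.aestronglyMeasurable) ?_
    filter_upwards with x
    rw [Real.norm_of_nonneg (Real.sqrt_nonneg _)]
    exact hgle x
  set I : ℝ := ∫ x, g x ∂lam with hI
  have hI0 : 0 ≤ I := integral_nonneg fun x => Real.sqrt_nonneg _
  have hIV : I ≤ V := by
    have := integral_mono hintg ((hint₀.add hint₁).div_const 2) hgle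
    rw [hI] at *
    calc I ≤ ∫ x, (ρ₀ x + ρ₁ x) / 2 ∂lam := this
    _ = V := by
        rw [integral_div, integral_add hint₀ hint₁, hi₀, hi₁]; ring
  -- KL lower bound
  have hKLlb : 2 * (V - I) ≤ ∫ x, ρ₀ x * Real.log (ρ₀ x / ρ₁ x) ∂lam := by
    have hmono : ∫ x, (2 * ρ₀ x - 2 * g x) ∂lam
        ≤ ∫ x, ρ₀ x * Real.log (ρ₀ x / ρ₁ x) ∂lam := by
      refine integral_mono_ae ((hint₀.const_mul 2).sub (hintg.const_mul 2)) hint ?_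
      filter_upwards [h₁pos] with x hx
      exact ptwise_kl (hn₀ x) hx
    have : ∫ x, (2 * ρ₀ x - 2 * g x) ∂lam = 2 * V - 2 * I := by
      rw [integral_sub (hint₀.const_mul 2) (hintg.const_mul 2),
        integral_const_mul, integral_const_mul, hi₀, ← hI]
    linarith [this ▸ hmono]
  constructor
  · set c : ℝ := (1 / V) * I with hc
    have hc0 : 0 ≤ c := by positivity
    have hc1 : c ≤ 1 := by
      rw [hc]
      rw [div_mul_eq_mul_div, one_mul, div_le_one hV]
      exact hIV
    set θ : ℝ := Real.arccos c with hθ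
    have hθ0 : 0 ≤ θ := Real.arccos_nonneg c
    have hθpi : θ ≤ π / 2 := by
      exact Real.arccos_le_pi_div_two.2 hc0
    have hcos : Real.cos θ = c := Real.cos_arccos (by linarith) hc1
    have hsq : θ ^ 2 ≤ π * (1 - c) := hcos ▸ sq_le_pi_one_sub_cos hθ0 hθpi
    have hVI : V - I = V * (1 - c) := by
      rw [hc]; field_simp
    have hmain : V * θ ^ 2 ≤ (π / 2) * ∫ x, ρ₀ x * Real.log (ρ₀ x / ρ₁ x) ∂lam := by
      have h1 : V * θ ^ 2 ≤ V * (π * (1 - c)) :=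
        mul_le_mul_of_nonneg_left hsq hV.le
      have h2 : (π / 2) * (2 * (V - I)) ≤ (π / 2) * ∫ x, ρ₀ x * Real.log (ρ₀ x / ρ₁ x) ∂lam :=
        mul_le_mul_of_nonneg_left hKLlb (by positivity)
      have h3 : (π / 2) * (2 * (V - I)) = V * (π * (1 - c)) := by
        rw [hVI]; ring
      linarith
    have : Real.sqrt V * θ = Real.sqrt (V * θ ^ 2) := by
      rw [Real.sqrt_mul hV.le, Real.sqrt_sq hθ0]
    rw [this]
    exact Real.sqrt_le_sqrt hmain
  · linarith

/-- **Comparison of the Fisher–Rao distance and the Kullback–Leibler divergence**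
(item 8 of the Proposition in Appendix B): `d_F ≤ √((π/2)·d_KL)`; in particular
`d_KL ≥ 0`. -/
theorem fisherRao_le_sqrt_klDiv
    {X : Type*} [MeasurableSpace X] (lam : Measure X) [IsFiniteMeasure lam]
    (V : ℝ) (hV : 0 < V) (hVmass : (lam Set.univ).toReal = V)
    (ρ₀ ρ₁ : X → ℝ) (h₀ : IsDensity lam V ρ₀) (h₁ : IsDensity lam V ρ₁)
    (h₁pos : ∀ᵐ x ∂lam, 0 < ρ₁ x)
    (hint : Integrable (fun x => ρ₀ x * Real.log (ρ₀ x / ρ₁ x)) lam) :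
    fisherRaoDist lam V ρ₀ ρ₁ ≤ Real.sqrt ((π / 2) * klDiv lam ρ₀ ρ₁) ∧
    0 ≤ klDiv lam ρ₀ ρ₁ := by
  simp only [fisherRaoDist, klDiv]
  exact fisherRao_le_sqrt_klDiv' lam V hV hVmass ρ₀ ρ₁ h₀ h₁ h₁pos hint
end

section
/- Let f₀ and f₁ be two distinct (as L² classes) nonnegative functions in L²(λ) with ∫ f₀² dλ = ∫ f₁² dλ = V, set θ := arccos((1/V) ∫ f₀ f₁ dλ) ∈ (0, π/2], and let f_t := (sin((1−t)θ)·f₀ + sin(tθ)·f₁)/sin θ for t ∈ [0,1], so that ρ_t := f_t² is a density of mass V for each t. Fix σ > 0. Then for every t ∈ [0,1]: d_F(ρ₀, ρ_t) = √V·t·θ and d_F(ρ_t, ρ₁) = √V·(1−t)·θ, hence the functional e(t) := σ·d_F(ρ₀, ρ_t)² + d_F(ρ_t, ρ₁)² equals V·θ²·(σt² + (1−t)²), and e attains its minimum over [0,1] at the unique point t = 1/(1+σ). (This is the computational core of the Theorem on inexact compatible density matching: the solution lies at parameter s = 1/(1+σ) along the Fisher–Rao geodesic.) -/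
open MeasureTheory Real Set

lemma aux_integrable_mul {X : Type*} [MeasurableSpace X] (lam : Measure X)
    (g h : X → ℝ) (hg : MemLp g 2 lam) (hh : MemLp h 2 lam) :
    Integrable (fun x => g x * h x) lam := by
  have H := MeasureTheory.L2.integrable_inner (𝕜 := ℝ) (hg.toLp g) (hh.toLp h)
  refine H.congr ?_
  filter_upwards [hg.coeFn_toLp, hh.coeFn_toLp] with x h1 h2
  simp [h1, h2, RCLike.inner_apply, mul_comm]

lemma aux_inner_eq {X : Type*} [MeasurableSpace X] (lam : Measure X)
    (g h : X → ℝ) (hg : MemLp g 2 lam) (hh : MemLp h 2 lam) :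
    (inner ℝ (hg.toLp g) (hh.toLp h) : ℝ) = ∫ x, g x * h x ∂lam := by
  rw [MeasureTheory.L2.inner_def]
  apply integral_congr_ae
  filter_upwards [hg.coeFn_toLp, hh.coeFn_toLp] with x h1 h2
  simp [h1, h2, RCLike.inner_apply, mul_comm]

set_option maxHeartbeats 2000000 in
/-- **Inexact compatible density matching along the Fisher–Rao geodesic**
(computational core of the Theorem on inexact compatible matching):
along the geodesic `ρ_t = f_t²`, one has `d_F(ρ₀, ρ_t) = √V·t·θ` and
`d_F(ρ_t, ρ₁) = √V·(1−t)·θ`, hence the functional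
`e(t) = σ·d_F(ρ₀,ρ_t)² + d_F(ρ_t,ρ₁)²` equals `V·θ²·(σt² + (1−t)²)` and is
uniquely minimized over `[0,1]` at `t = 1/(1+σ)`. -/
theorem inexact_compatible_matching_minimizer
    {X : Type*} [MeasurableSpace X] (lam : Measure X) [IsFiniteMeasure lam]
    (V : ℝ) (hV : 0 < V) (hVmass : (lam Set.univ).toReal = V)
    (f₀ f₁ : X → ℝ)
    (hf₀ : MemLp f₀ 2 lam) (hf₁ : MemLp f₁ 2 lam)
    (hf₀nn : ∀ᵐ x ∂lam, 0 ≤ f₀ x) (hf₁nn : ∀ᵐ x ∂lam, 0 ≤ f₁ x)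
    (hf₀V : ∫ x, (f₀ x) ^ 2 ∂lam = V) (hf₁V : ∫ x, (f₁ x) ^ 2 ∂lam = V)
    (hne : ¬ (f₀ =ᵐ[lam] f₁))
    (θ : ℝ) (hθ : θ = Real.arccos ((1 / V) * ∫ x, f₀ x * f₁ x ∂lam))
    (f : ℝ → X → ℝ)
    (hf : ∀ t x, f t x = (Real.sin ((1 - t) * θ) * f₀ x + Real.sin (t * θ) * f₁ x) /
      Real.sin θ)
    (σ : ℝ) (hσ : 0 < σ) :
    (0 < θ ∧ θ ≤ π / 2) ∧
    (∀ t ∈ Set.Icc (0 : ℝ) 1,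
      fisherRaoDist lam V (fun x => (f₀ x) ^ 2) (fun x => (f t x) ^ 2) =
        Real.sqrt V * t * θ ∧
      fisherRaoDist lam V (fun x => (f t x) ^ 2) (fun x => (f₁ x) ^ 2) =
        Real.sqrt V * (1 - t) * θ ∧
      σ * (fisherRaoDist lam V (fun x => (f₀ x) ^ 2) (fun x => (f t x) ^ 2)) ^ 2 +
          (fisherRaoDist lam V (fun x => (f t x) ^ 2) (fun x => (f₁ x) ^ 2)) ^ 2 =
        V * θ ^ 2 * (σ * t ^ 2 + (1 - t) ^ 2)) ∧
    (1 / (1 + σ) ∈ Set.Icc (0 : ℝ) 1) ∧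
    (∀ t ∈ Set.Icc (0 : ℝ) 1,
      σ * (fisherRaoDist lam V (fun x => (f₀ x) ^ 2)
            (fun x => (f (1 / (1 + σ)) x) ^ 2)) ^ 2 +
          (fisherRaoDist lam V (fun x => (f (1 / (1 + σ)) x) ^ 2)
            (fun x => (f₁ x) ^ 2)) ^ 2 ≤
        σ * (fisherRaoDist lam V (fun x => (f₀ x) ^ 2) (fun x => (f t x) ^ 2)) ^ 2 +
          (fisherRaoDist lam V (fun x => (f t x) ^ 2) (fun x => (f₁ x) ^ 2)) ^ 2 ∧
      (t ≠ 1 / (1 + σ) →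
        σ * (fisherRaoDist lam V (fun x => (f₀ x) ^ 2)
              (fun x => (f (1 / (1 + σ)) x) ^ 2)) ^ 2 +
            (fisherRaoDist lam V (fun x => (f (1 / (1 + σ)) x) ^ 2)
              (fun x => (f₁ x) ^ 2)) ^ 2 <
          σ * (fisherRaoDist lam V (fun x => (f₀ x) ^ 2) (fun x => (f t x) ^ 2)) ^ 2 +
            (fisherRaoDist lam V (fun x => (f t x) ^ 2) (fun x => (f₁ x) ^ 2)) ^ 2)) := by
  set I : ℝ := ∫ x, f₀ x * f₁ x ∂lam with hIdef
  have i00 := aux_integrable_mul lam f₀ f₀ hf₀ hf₀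
  have i01 := aux_integrable_mul lam f₀ f₁ hf₀ hf₁
  have i11 := aux_integrable_mul lam f₁ f₁ hf₁ hf₁
  have hV00 : ∫ x, f₀ x * f₀ x ∂lam = V := by simpa [sq] using hf₀V
  have hV11 : ∫ x, f₁ x * f₁ x ∂lam = V := by simpa [sq] using hf₁V
  -- norms
  have hn0 : ‖hf₀.toLp f₀‖ = Real.sqrt V := by
    have h := real_inner_self_eq_norm_sq (hf₀.toLp f₀)
    rw [aux_inner_eq lam f₀ f₀ hf₀ hf₀, hV00] at h
    rw [h, Real.sqrt_sq (norm_nonneg _)]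
  have hn1 : ‖hf₁.toLp f₁‖ = Real.sqrt V := by
    have h := real_inner_self_eq_norm_sq (hf₁.toLp f₁)
    rw [aux_inner_eq lam f₁ f₁ hf₁ hf₁, hV11] at h
    rw [h, Real.sqrt_sq (norm_nonneg _)]
  have hsqV : Real.sqrt V * Real.sqrt V = V := Real.mul_self_sqrt hV.le
  -- Cauchy–Schwarz, strict
  have hIle : I ≤ V := by
    have h := real_inner_le_norm (hf₀.toLp f₀) (hf₁.toLp f₁)
    rwa [aux_inner_eq lam f₀ f₁ hf₀ hf₁, hn0, hn1, hsqV] at h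
  have hIne : I ≠ V := by
    intro hEq
    have h : (inner ℝ (hf₀.toLp f₀) (hf₁.toLp f₁) : ℝ) = ‖hf₀.toLp f₀‖ * ‖hf₁.toLp f₁‖ := by
      rw [aux_inner_eq lam f₀ f₁ hf₀ hf₁, hn0, hn1, hsqV]; exact hEq
    rw [inner_eq_norm_mul_iff_real, hn0, hn1] at h
    have hsV : Real.sqrt V ≠ 0 := by positivity
    have : hf₀.toLp f₀ = hf₁.toLp f₁ := smul_right_injective _ hsV h
    exact hne ((MemLp.toLp_eq_toLp_iff hf₀ hf₁).mp this)
  have hIlt : I < V := lt_of_le_of_ne hIle hIne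
  have hInn : 0 ≤ I := by
    apply integral_nonneg_of_ae
    filter_upwards [hf₀nn, hf₁nn] with x h0 h1
    exact mul_nonneg h0 h1
  -- θ bounds
  have hθpos : 0 < θ := by
    rw [hθ]
    apply Real.arccos_pos.2
    rw [div_mul_eq_mul_div, one_mul, div_lt_one hV]
    exact hIlt
  have hθle : θ ≤ π / 2 := by
    rw [hθ]
    exact Real.arccos_le_pi_div_two.2 (by positivity)
  have hθpi : θ ≤ π := hθle.trans (by linarith [Real.pi_pos])
  have hsin : 0 < Real.sin θ := Real.sin_pos_of_pos_of_lt_pi hθpos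
    (lt_of_le_of_lt hθle (by linarith [Real.pi_pos]))
  have hcos : Real.cos θ = I / V := by
    rw [hθ, Real.cos_arccos]
    · rw [div_mul_eq_mul_div, one_mul]
    · rw [div_mul_eq_mul_div, one_mul]
      have : (0:ℝ) ≤ I / V := by positivity
      linarith
    · rw [div_mul_eq_mul_div, one_mul, div_le_one hV]; exact hIle
  -- main claim for each t
  have main : ∀ t ∈ Set.Icc (0:ℝ) 1,
      fisherRaoDist lam V (fun x => (f₀ x) ^ 2) (fun x => (f t x) ^ 2) =
        Real.sqrt V * t * θ ∧
      fisherRaoDist lam V (fun x => (f t x) ^ 2) (fun x => (f₁ x) ^ 2) =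
        Real.sqrt V * (1 - t) * θ := by
    rintro t ⟨ht0, ht1⟩
    set a : ℝ := Real.sin ((1 - t) * θ) / Real.sin θ with ha
    set b : ℝ := Real.sin (t * θ) / Real.sin θ with hb
    have htθ0 : 0 ≤ t * θ := mul_nonneg ht0 hθpos.le
    have htθ : t * θ ≤ θ := by nlinarith
    have h1tθ0 : 0 ≤ (1 - t) * θ := mul_nonneg (by linarith) hθpos.le
    have h1tθ : (1 - t) * θ ≤ θ := by nlinarith
    have ha0 : 0 ≤ a := div_nonneg
      (Real.sin_nonneg_of_nonneg_of_le_pi h1tθ0 (h1tθ.trans hθpi)) hsin.le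
    have hb0 : 0 ≤ b := div_nonneg
      (Real.sin_nonneg_of_nonneg_of_le_pi htθ0 (htθ.trans hθpi)) hsin.le
    have hft : ∀ x, f t x = a * f₀ x + b * f₁ x := by
      intro x; rw [hf t x, ha, hb]; ring
    have hftnn : ∀ᵐ x ∂lam, 0 ≤ f t x := by
      filter_upwards [hf₀nn, hf₁nn] with x h0 h1
      rw [hft x]; positivity
    -- integrals
    have J0 : ∫ x, f₀ x * f t x ∂lam = a * V + b * I := by
      have heq : (fun x => f₀ x * f t x) =
          fun x => a * (f₀ x * f₀ x) + b * (f₀ x * f₁ x) := by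
        funext x; rw [hft x]; ring
      rw [heq, integral_add (i00.const_mul a) (i01.const_mul b),
        integral_const_mul, integral_const_mul, hV00, ← hIdef]
    have J1 : ∫ x, f t x * f₁ x ∂lam = a * I + b * V := by
      have heq : (fun x => f t x * f₁ x) =
          fun x => a * (f₀ x * f₁ x) + b * (f₁ x * f₁ x) := by
        funext x; rw [hft x]; ring
      rw [heq, integral_add (i01.const_mul a) (i11.const_mul b),
        integral_const_mul, integral_const_mul, hV11, ← hIdef]
    have S0 : ∫ x, Real.sqrt ((f₀ x) ^ 2 * (f t x) ^ 2) ∂lam = a * V + b * I := by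
      rw [← J0]
      apply integral_congr_ae
      filter_upwards [hf₀nn, hftnn] with x h0 h1
      rw [← mul_pow, Real.sqrt_sq (mul_nonneg h0 h1)]
    have S1 : ∫ x, Real.sqrt ((f t x) ^ 2 * (f₁ x) ^ 2) ∂lam = a * I + b * V := by
      rw [← J1]
      apply integral_congr_ae
      filter_upwards [hftnn, hf₁nn] with x h0 h1
      rw [← mul_pow, Real.sqrt_sq (mul_nonneg h0 h1)]
    have hIVcos : I = V * Real.cos θ := by
      rw [hcos]; field_simp
    constructor
    · have hval : (1 / V) * (a * V + b * I) = Real.cos (t * θ) := by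
        rw [hIVcos, ha, hb]
        have h1 : (1 - t) * θ = θ - t * θ := by ring
        rw [h1, Real.sin_sub]
        field_simp
        ring
      unfold fisherRaoDist
      rw [S0, hval, Real.arccos_cos htθ0 (htθ.trans hθpi), mul_assoc]
    · have hval : (1 / V) * (a * I + b * V) = Real.cos ((1 - t) * θ) := by
        rw [hIVcos, ha, hb]
        have h1 : t * θ = θ - (1 - t) * θ := by ring
        rw [h1, Real.sin_sub]
        field_simp
        ring
      unfold fisherRaoDist
      rw [S1, hval, Real.arccos_cos h1tθ0 (h1tθ.trans hθpi), mul_assoc]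
  -- energy identity
  have energy : ∀ t ∈ Set.Icc (0:ℝ) 1,
      σ * (fisherRaoDist lam V (fun x => (f₀ x) ^ 2) (fun x => (f t x) ^ 2)) ^ 2 +
          (fisherRaoDist lam V (fun x => (f t x) ^ 2) (fun x => (f₁ x) ^ 2)) ^ 2 =
        V * θ ^ 2 * (σ * t ^ 2 + (1 - t) ^ 2) := by
    intro t ht
    obtain ⟨h0, h1⟩ := main t ht
    rw [h0, h1]
    simp only [mul_pow, Real.sq_sqrt hV.le]
    ring
  have hmem : 1 / (1 + σ) ∈ Set.Icc (0:ℝ) 1 := by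
    constructor
    · positivity
    · rw [div_le_one (by linarith)]; linarith
  refine ⟨⟨hθpos, hθle⟩, fun t ht => ⟨(main t ht).1, (main t ht).2, energy t ht⟩,
    hmem, fun t ht => ?_⟩
  have e1 := energy t ht
  have e2 := energy (1 / (1 + σ)) hmem
  have hVθ : 0 < V * θ ^ 2 := by positivity
  have key : ∀ s : ℝ, σ * s ^ 2 + (1 - s) ^ 2 - (σ * (1/(1+σ)) ^ 2 + (1 - 1/(1+σ)) ^ 2) =
      (1 + σ) * (s - 1/(1+σ)) ^ 2 := by
    intro s
    have h1σ : (1:ℝ) + σ ≠ 0 := by linarith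
    field_simp
    ring
  constructor
  · rw [e1, e2]
    have hle : σ * (1/(1+σ)) ^ 2 + (1 - 1/(1+σ)) ^ 2 ≤ σ * t ^ 2 + (1 - t) ^ 2 := by
      have hk := key t
      have hp : 0 ≤ (1 + σ) * (t - 1/(1+σ)) ^ 2 :=
        mul_nonneg (by linarith) (sq_nonneg _)
      linarith
    exact mul_le_mul_of_nonneg_left hle hVθ.le
  · intro hne'
    rw [e1, e2]
    have hsq : 0 < (t - 1/(1+σ)) ^ 2 := by
      have h : t - 1/(1+σ) ≠ 0 := sub_ne_zero.mpr hne'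
      positivity
    have hlt : σ * (1/(1+σ)) ^ 2 + (1 - 1/(1+σ)) ^ 2 < σ * t ^ 2 + (1 - t) ^ 2 := by
      have hk := key t
      have hp : 0 < (1 + σ) * (t - 1/(1+σ)) ^ 2 := mul_pos (by linarith) hsq
      linarith
    exact (mul_lt_mul_iff_right₀ hVθ).mpr hlt
end
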